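/- Let F be a field and f : ℤ × ℤ → F any function. For (s,t) ∈ ℤ² and n ≥ 0 define τ^{(s,t)}_n = det_{0 ≤ i,j < n}(f_{s+i,t+j}), the determinant of the n × n matrix whose (i,j) entry is f_{s+i,t+j} (so τ^{(s,t)}_0 = 1). Then for all (s,t) ∈ ℤ² and all n ≥ 1, the bilinear form of the discrete 2D Toda molecule holds: τ^{(s+1,t+1)}_{n−1} · τ^{(s,t)}_{n+1} − τ^{(s+1,t+1)}_n · τ^{(s,t)}_n + τ^{(s+1,t)}_n · τ^{(s,t+1)}_n = 0. -/

import Mathlib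

/-- `tau f s t n` is the `n × n` determinant `det_{0 ≤ i,j < n} (f (s+i, t+j))`. -/
noncomputable def tau {F : Type*} [Field F] (f : ℤ × ℤ → F) (s t : ℤ) (n : ℕ) : F :=
  Matrix.det (Matrix.of fun i j : Fin n => f (s + (i : ℕ), t + (j : ℕ)))

/-- `f` gives the solution `(a, b)` through the dependent variable transformation:
all determinants `τ` are nonzero, `a^{(s,t)}_n = τ^{(s+1,t)}_{n+1} τ^{(s,t)}_n /
(τ^{(s+1,t)}_n τ^{(s,t)}_{n+1})` for `n ≥ 0`, and `b^{(s,t)}_n =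
τ^{(s,t+1)}_{n-1} τ^{(s,t)}_{n+1} / (τ^{(s,t+1)}_n τ^{(s,t)}_n)` for `n ≥ 1`. -/
def GivesSol {F : Type*} [Field F] (f : ℤ × ℤ → F) (a b : ℤ → ℤ → ℕ → F) : Prop :=
  (∀ (s t : ℤ) (n : ℕ), tau f s t n ≠ 0) ∧
  (∀ (s t : ℤ) (n : ℕ),
    a s t n = tau f (s + 1) t (n + 1) * tau f s t n / (tau f (s + 1) t n * tau f s t (n + 1))) ∧
  (∀ (s t : ℤ) (n : ℕ),
    b s t (n + 1) =
      tau f s (t + 1) n * tau f s t (n + 2) / (tau f s (t + 1) (n + 1) * tau f s t (n + 1)))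

open Matrix Equiv

namespace TodaDJ

variable {K : Type*} [Field K] {m : Type*} [Fintype m] [DecidableEq m]

lemma det_submatrix_equiv_equiv {n : Type*} [Fintype n] [DecidableEq n]
    {R : Type*} [CommRing R] (e₁ e₂ : n ≃ m) (A : Matrix m m R) :
    det (A.submatrix e₁ e₂) = (Perm.sign (e₁.symm.trans e₂) : ℤ) * det A := by
  have : A.submatrix ⇑e₁ ⇑e₂ = (A.submatrix _root_.id ⇑(e₁.symm.trans e₂)).submatrix ⇑e₁ ⇑e₁ := by
    ext i j; simp
  rw [this, det_submatrix_equiv_self, det_permute']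

/-- Core block computation underlying Desnanot–Jacobi, with an invertible interior. -/
lemma block_dj (P : Matrix m m K) (Q : Matrix m (Fin 2) K) (R : Matrix (Fin 2) m K)
    (S : Matrix (Fin 2) (Fin 2) K) (hP : IsUnit P.det) :
    det (fromBlocks P Q R S) * det P =
      det (fromBlocks P (of fun i (_ : Fin 1) => Q i 0) (of fun (_ : Fin 1) j => R 0 j)
          (of fun _ _ => S 0 0)) *
        det (fromBlocks P (of fun i (_ : Fin 1) => Q i 1) (of fun (_ : Fin 1) j => R 1 j)
          (of fun _ _ => S 1 1)) -
      det (fromBlocks P (of fun i (_ : Fin 1) => Q i 1) (of fun (_ : Fin 1) j => R 0 j)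
          (of fun _ _ => S 0 1)) *
        det (fromBlocks P (of fun i (_ : Fin 1) => Q i 0) (of fun (_ : Fin 1) j => R 1 j)
          (of fun _ _ => S 1 0)) := by
  haveI := P.invertibleOfIsUnitDet hP
  have key : ∀ (a b : Fin 2),
      det (fromBlocks P (of fun i (_ : Fin 1) => Q i b) (of fun (_ : Fin 1) j => R a j)
          (of fun _ _ => S a b)) = det P * (S a b - (R * ⅟P * Q) a b) := by
    intro a b
    rw [det_fromBlocks₁₁]
    congr 1
    rw [det_fin_one]
    simp [Matrix.mul_apply, Finset.mul_sum, Finset.sum_mul]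
  rw [key, key, key, key, det_fromBlocks₁₁, det_fin_two]
  simp only [Matrix.sub_apply]
  ring

variable {k : ℕ}

/-- The map embedding `Fin k` as the interior indices `1, …, k` of `Fin (k+2)`. -/
def innerMap (i : Fin k) : Fin (k + 2) := i.succ.castSucc

def f2 : Fin k ⊕ Fin 2 → Fin (k + 2) :=
  Sum.elim (fun i => innerMap i) (fun b => if b = 0 then 0 else Fin.last (k + 1))

def f1 : Fin k ⊕ Fin 1 → Fin (k + 1) :=
  Sum.elim (fun i => i.succ) (fun _ => 0)

def f1' : Fin k ⊕ Fin 1 → Fin (k + 1) :=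
  Sum.elim (fun i => i.castSucc) (fun _ => Fin.last k)

lemma f2_bij : Function.Bijective (f2 (k := k)) := by
  rw [Fintype.bijective_iff_injective_and_card]
  refine ⟨?_, by simp⟩
  rintro (i | b) (j | c) h
  · simp only [f2, Sum.elim_inl, innerMap, Fin.ext_iff, Fin.coe_castSucc, Fin.val_succ] at h
    exact congrArg Sum.inl (Fin.ext (by omega))
  · exfalso; have := i.isLt
    fin_cases c <;> simp [f2, innerMap, Fin.ext_iff, Fin.last, -Fin.val_eq_zero_iff] at h <;> omega
  · exfalso; have := j.isLt
    fin_cases b <;> simp [f2, innerMap, Fin.ext_iff, Fin.last, -Fin.val_eq_zero_iff] at h <;> omega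
  · fin_cases b <;> fin_cases c <;> simp_all [f2, Fin.ext_iff, Fin.last, -Fin.val_eq_zero_iff]

lemma f1_bij : Function.Bijective (f1 (k := k)) := by
  rw [Fintype.bijective_iff_injective_and_card]
  refine ⟨?_, by simp⟩
  rintro (i | b) (j | c) h
  · simp only [f1, Sum.elim_inl, Fin.ext_iff, Fin.val_succ] at h
    exact congrArg Sum.inl (Fin.ext (by omega))
  · exfalso; simp [f1, Fin.ext_iff] at h
  · exfalso; simp [f1, Fin.ext_iff] at h
  · exact congrArg Sum.inr (Subsingleton.elim _ _)

lemma f1'_bij : Function.Bijective (f1' (k := k)) := by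
  rw [Fintype.bijective_iff_injective_and_card]
  refine ⟨?_, by simp⟩
  rintro (i | b) (j | c) h
  · simp only [f1', Sum.elim_inl, Fin.ext_iff, Fin.coe_castSucc] at h
    exact congrArg Sum.inl (Fin.ext (by omega))
  · exfalso; have := i.isLt; simp [f1', Fin.ext_iff, Fin.last] at h; omega
  · exfalso; have := j.isLt; simp [f1', Fin.ext_iff, Fin.last] at h; omega
  · exact congrArg Sum.inr (Subsingleton.elim _ _)

noncomputable def e2 : Fin k ⊕ Fin 2 ≃ Fin (k + 2) := Equiv.ofBijective _ f2_bij
noncomputable def e1 : Fin k ⊕ Fin 1 ≃ Fin (k + 1) := Equiv.ofBijective _ f1_bij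
noncomputable def e1' : Fin k ⊕ Fin 1 ≃ Fin (k + 1) := Equiv.ofBijective _ f1'_bij

@[simp] lemma e2_inl (i : Fin k) : e2 (Sum.inl i) = innerMap i := rfl
@[simp] lemma e2_inr0 : e2 (k := k) (Sum.inr 0) = 0 := rfl
@[simp] lemma e2_inr1 : e2 (k := k) (Sum.inr 1) = Fin.last (k + 1) := rfl
@[simp] lemma e1_inl (i : Fin k) : e1 (Sum.inl i) = i.succ := rfl
@[simp] lemma e1_inr (b : Fin 1) : e1 (k := k) (Sum.inr b) = 0 := rfl
@[simp] lemma e1'_inl (i : Fin k) : e1' (Sum.inl i) = i.castSucc := rfl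
@[simp] lemma e1'_inr (b : Fin 1) : e1' (k := k) (Sum.inr b) = Fin.last k := rfl

/-- Desnanot–Jacobi over a field, assuming the interior minor is nonzero. -/
lemma dj_field (A : Matrix (Fin (k + 2)) (Fin (k + 2)) K)
    (h : det (A.submatrix innerMap innerMap) ≠ 0) :
    det A * det (A.submatrix innerMap innerMap) =
      det (A.submatrix Fin.castSucc Fin.castSucc) * det (A.submatrix Fin.succ Fin.succ) -
        det (A.submatrix Fin.castSucc Fin.succ) * det (A.submatrix Fin.succ Fin.castSucc) := by
  set P : Matrix (Fin k) (Fin k) K := A.submatrix innerMap innerMap with hP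
  set Q : Matrix (Fin k) (Fin 2) K := of fun i b => A (innerMap i) (e2 (Sum.inr b)) with hQ
  set R : Matrix (Fin 2) (Fin k) K := of fun b j => A (e2 (Sum.inr b)) (innerMap j) with hR
  set S : Matrix (Fin 2) (Fin 2) K := of fun a b => A (e2 (Sum.inr a)) (e2 (Sum.inr b)) with hS
  have hA : det A = det (fromBlocks P Q R S) := by
    rw [← det_submatrix_equiv_self e2 A]
    congr 1
    ext (i | a) (j | b) <;> rfl
  have hcc : det (A.submatrix Fin.castSucc Fin.castSucc) =
      det (fromBlocks P (of fun i (_ : Fin 1) => Q i 0) (of fun (_ : Fin 1) j => R 0 j)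
        (of fun _ _ => S 0 0)) := by
    rw [← det_submatrix_equiv_self e1]
    congr 1
    ext (i | a) (j | b) <;>
      simp [f1, hQ, hR, hS, hP, innerMap, Matrix.submatrix, Fin.ext_iff, Fin.succ_castSucc, Fin.succ_last, -Fin.castSucc_succ, -Fin.val_eq_zero_iff]
  have hss : det (A.submatrix Fin.succ Fin.succ) =
      det (fromBlocks P (of fun i (_ : Fin 1) => Q i 1) (of fun (_ : Fin 1) j => R 1 j)
        (of fun _ _ => S 1 1)) := by
    rw [← det_submatrix_equiv_self e1']
    congr 1
    ext (i | a) (j | b) <;>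
      simp [f1', hQ, hR, hS, hP, innerMap, Matrix.submatrix, Fin.ext_iff, Fin.last, Fin.succ_castSucc, Fin.succ_last, -Fin.castSucc_succ, -Fin.val_eq_zero_iff]
  set s1 : K := ((Perm.sign ((e1 (k := k)).symm.trans e1') : ℤ) : K) with hs1
  set s2 : K := ((Perm.sign ((e1' (k := k)).symm.trans e1) : ℤ) : K) with hs2
  have hcs : det (fromBlocks P (of fun i (_ : Fin 1) => Q i 1) (of fun (_ : Fin 1) j => R 0 j)
        (of fun _ _ => S 0 1)) =
      s1 * det (A.submatrix Fin.castSucc Fin.succ) := by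
    rw [hs1, ← det_submatrix_equiv_equiv e1 e1']
    congr 1
    ext (i | a) (j | b) <;>
      simp [f1, f1', hQ, hR, hS, hP, innerMap, Matrix.submatrix, Fin.ext_iff, Fin.last,
        Fin.succ_castSucc, Fin.succ_last, -Fin.castSucc_succ, -Fin.val_eq_zero_iff]
  have hsc : det (fromBlocks P (of fun i (_ : Fin 1) => Q i 0) (of fun (_ : Fin 1) j => R 1 j)
        (of fun _ _ => S 1 0)) =
      s2 * det (A.submatrix Fin.succ Fin.castSucc) := by
    rw [hs2, ← det_submatrix_equiv_equiv e1' e1]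
    congr 1
    ext (i | a) (j | b) <;>
      simp [f1, f1', hQ, hR, hS, hP, innerMap, Matrix.submatrix, Fin.ext_iff, Fin.last,
        Fin.succ_castSucc, Fin.succ_last, -Fin.castSucc_succ, -Fin.val_eq_zero_iff]
  have hsgn : s1 * s2 = 1 := by
    have h1 : (e1' (k := k)).symm.trans e1 = ((e1 (k := k)).symm.trans e1')⁻¹ := by
      ext x; simp [Equiv.Perm.inv_def]
    rw [hs1, hs2, h1, Equiv.Perm.sign_inv]
    rcases Int.units_eq_one_or (Perm.sign ((e1 (k := k)).symm.trans e1')) with h' | h' <;>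
      rw [h'] <;> norm_num
  have hPunit : IsUnit P.det := Ne.isUnit h
  have key := block_dj P Q R S hPunit
  rw [← hA, ← hcc, ← hss, hcs, hsc] at key
  rw [key]
  congr 1
  calc (s1 * det (A.submatrix Fin.castSucc Fin.succ)) *
        (s2 * det (A.submatrix Fin.succ Fin.castSucc)) =
      (s1 * s2) * (det (A.submatrix Fin.castSucc Fin.succ) *
        det (A.submatrix Fin.succ Fin.castSucc)) := by ring
    _ = _ := by rw [hsgn, one_mul]

/-- Desnanot–Jacobi over an arbitrary commutative ring, by genericity. -/
lemma dj_ring {R : Type*} [CommRing R] (A : Matrix (Fin (k + 2)) (Fin (k + 2)) R) :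
    det A * det (A.submatrix innerMap innerMap) =
      det (A.submatrix Fin.castSucc Fin.castSucc) * det (A.submatrix Fin.succ Fin.succ) -
        det (A.submatrix Fin.castSucc Fin.succ) * det (A.submatrix Fin.succ Fin.castSucc) := by
  have hIM : Function.Injective (innerMap (k := k)) := by
    intro i j h
    simpa [innerMap, Fin.ext_iff] using h
  set σR := MvPolynomial (Fin (k + 2) × Fin (k + 2)) ℤ with hσR
  set K := FractionRing σR with hK
  set M : Matrix (Fin (k + 2)) (Fin (k + 2)) σR := mvPolynomialX _ _ ℤ with hM
  have hMinner : det (M.submatrix innerMap innerMap) ≠ 0 := by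
    have hren : Function.Injective
        (MvPolynomial.rename (R := ℤ) (Prod.map (innerMap (k := k)) (innerMap (k := k)))) :=
      MvPolynomial.rename_injective _ (Function.Injective.prodMap hIM hIM)
    have heq : M.submatrix innerMap innerMap =
        ((MvPolynomial.rename (Prod.map (innerMap (k := k)) (innerMap (k := k)))).toRingHom :
          MvPolynomial (Fin k × Fin k) ℤ →+* σR).mapMatrix (mvPolynomialX (Fin k) (Fin k) ℤ) := by
      ext i j
      simp [hM]
    rw [heq, ← RingHom.map_det]
    intro hz
    refine det_mvPolynomialX_ne_zero (Fin k) ℤ (hren ?_)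
    simpa using hz
  have hφinj : Function.Injective (algebraMap σR K) := IsFractionRing.injective σR K
  set φ : σR →+* K := algebraMap σR K with hφ
  have hgen : det M * det (M.submatrix innerMap innerMap) =
      det (M.submatrix Fin.castSucc Fin.castSucc) * det (M.submatrix Fin.succ Fin.succ) -
        det (M.submatrix Fin.castSucc Fin.succ) * det (M.submatrix Fin.succ Fin.castSucc) := by
    apply hφinj
    have hpush : ∀ {l : ℕ} (u v : Fin l → Fin (k + 2)),
        φ (det (M.submatrix u v)) = det ((M.map φ).submatrix u v) := by
      intro l u v
      rw [RingHom.map_det]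
      rfl
    rw [_root_.map_mul, _root_.map_sub, _root_.map_mul, _root_.map_mul, RingHom.map_det]
    rw [hpush, hpush, hpush, hpush, hpush]
    have hdj := dj_field (M.map φ) (by
      rw [← hpush]
      intro hz
      exact hMinner (hφinj (by simpa using hz)))
    have hmm : det (M.map φ) = det ((RingHom.mapMatrix φ) M) := rfl
    rw [← hmm]
    exact hdj
  set ψ : σR →+* R := MvPolynomial.eval₂Hom (Int.castRingHom R) (fun p => A p.1 p.2) with hψ
  have hMA : M.map ⇑ψ = A := by
    rw [hψ, hM]
    exact mvPolynomialX_map_eval₂ (Int.castRingHom R) A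
  have key := congrArg ψ hgen
  have hpush : ∀ {l : ℕ} (u v : Fin l → Fin (k + 2)),
      ψ (det (M.submatrix u v)) = det (A.submatrix u v) := by
    intro l u v
    rw [RingHom.map_det, ← hMA]
    rfl
  rw [_root_.map_mul, _root_.map_sub, _root_.map_mul, _root_.map_mul, RingHom.map_det,
    hpush, hpush, hpush, hpush, hpush] at key
  have hdA : det ((RingHom.mapMatrix ψ) M) = det A := by rw [RingHom.mapMatrix_apply, hMA]
  rw [hdA] at key
  exact key

end TodaDJ

/-- The determinants `τ^{(s,t)}_n` of an arbitrary function `f : ℤ² → F`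
satisfy the bilinear form of the discrete 2D Toda molecule. -/
theorem bilinear_toda {F : Type*} [Field F] (f : ℤ × ℤ → F) (s t : ℤ) (n : ℕ) (hn : 1 ≤ n) :
    tau f (s + 1) (t + 1) (n - 1) * tau f s t (n + 1)
      - tau f (s + 1) (t + 1) n * tau f s t n
      + tau f (s + 1) t n * tau f s (t + 1) n = 0 := by
  obtain ⟨k, rfl⟩ : ∃ k, n = k + 1 := ⟨n - 1, by omega⟩
  set A : Matrix (Fin (k + 2)) (Fin (k + 2)) F :=
    Matrix.of (fun i j : Fin (k + 2) => f (s + (i : ℕ), t + (j : ℕ))) with hA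
  have h0 : tau f s t (k + 2) = A.det := rfl
  have h1 : tau f (s + 1) (t + 1) k = (A.submatrix TodaDJ.innerMap TodaDJ.innerMap).det := by
    unfold tau
    congr 1
    all_goals
      ext i j
      show f _ = f _
      congr 1
      simp only [TodaDJ.innerMap, Prod.ext_iff, Fin.coe_castSucc, Fin.val_succ]
      constructor <;> push_cast <;> ring
  have h2 : tau f s t (k + 1) = (A.submatrix Fin.castSucc Fin.castSucc).det := by
    unfold tau
    congr 1
    all_goals
      ext i j
      show f _ = f _
      congr 1
      simp only [Prod.ext_iff, Fin.coe_castSucc]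
      constructor <;> push_cast <;> ring
  have h3 : tau f (s + 1) (t + 1) (k + 1) = (A.submatrix Fin.succ Fin.succ).det := by
    unfold tau
    congr 1
    all_goals
      ext i j
      show f _ = f _
      congr 1
      simp only [Prod.ext_iff, Fin.val_succ]
      constructor <;> push_cast <;> ring
  have h4 : tau f s (t + 1) (k + 1) = (A.submatrix Fin.castSucc Fin.succ).det := by
    unfold tau
    congr 1
    all_goals
      ext i j
      show f _ = f _
      congr 1
      simp only [Prod.ext_iff, Fin.coe_castSucc, Fin.val_succ]
      constructor <;> push_cast <;> ring
  have h5 : tau f (s + 1) t (k + 1) = (A.submatrix Fin.succ Fin.castSucc).det := by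
    unfold tau
    congr 1
    all_goals
      ext i j
      show f _ = f _
      congr 1
      simp only [Prod.ext_iff, Fin.coe_castSucc, Fin.val_succ]
      constructor <;> push_cast <;> ring
  have key := TodaDJ.dj_ring A
  have e1 : k + 1 - 1 = k := rfl
  have e2 : k + 1 + 1 = k + 2 := rfl
  rw [e1, e2, h0, h1, h2, h3, h4, h5]
  linear_combination key
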